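/- Let A be an abelian group, R a (not necessarily commutative) ring, and f, g : A → R. Then fdeg(f · g) ≤ fdeg(f) + fdeg(g), where (f·g)(x) = f(x)·g(x). -/

import Mathlib

open scoped BigOperators

/-- Action of the integral group ring `ℤ[A]` on functions `A → B`:
`(τ_a * f)(x) = f(x + a)`, extended linearly. -/
noncomputable def groupRingAct {A B : Type*} [AddCommGroup A] [AddCommGroup B]
    (r : AddMonoidAlgebra ℤ A) (f : A → B) : A → B :=
  fun x => r.coeff.sum fun a z => z • f (x + a)

/-- The augmentation ideal of the group ring `R[A]`. -/
noncomputable def augIdealR (R : Type*) (A : Type*) [CommRing R] [AddCommGroup A] :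
    Ideal (AddMonoidAlgebra R A) :=
  Ideal.span {r : AddMonoidAlgebra R A | ∃ a : A, r = AddMonoidAlgebra.single a 1 - 1}

/-- The augmentation ideal of `ℤ[A]`. -/
noncomputable def augIdeal (A : Type*) [AddCommGroup A] : Ideal (AddMonoidAlgebra ℤ A) :=
  augIdealR ℤ A

/-- The functional degree of `f : A → B`: the least `n` with `I^(n+1) * f = 0`,
where `I` is the augmentation ideal of `ℤ[A]`; `⊤` if there is no such `n`. -/
noncomputable def fdeg {A B : Type*} [AddCommGroup A] [AddCommGroup B] (f : A → B) : ℕ∞ :=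
  sInf {N : ℕ∞ | ∃ n : ℕ, N = (n : ℕ∞) ∧
    ∀ r ∈ augIdeal A ^ (n + 1), groupRingAct r f = 0}

section Aux

variable {A B : Type*} [AddCommGroup A] [AddCommGroup B]

lemma act_zero_left (f : A → B) : groupRingAct (0 : AddMonoidAlgebra ℤ A) f = 0 := by
  funext x; simp [groupRingAct]

lemma act_add_left (r s : AddMonoidAlgebra ℤ A) (f : A → B) :
    groupRingAct (r + s) f = groupRingAct r f + groupRingAct s f := by
  funext x
  simp only [groupRingAct, Pi.add_apply, AddMonoidAlgebra.coeff_add]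
  exact Finsupp.sum_add_index' (by simp) (by intros; rw [add_smul])

lemma act_single (a : A) (z : ℤ) (f : A → B) :
    groupRingAct (AddMonoidAlgebra.single a z) f = fun x => z • f (x + a) := by
  funext x
  exact Finsupp.sum_single_index (by simp)

lemma act_add_right (r : AddMonoidAlgebra ℤ A) (f g : A → B) :
    groupRingAct r (f + g) = groupRingAct r f + groupRingAct r g := by
  funext x
  simp only [groupRingAct, Pi.add_apply, smul_add]
  exact Finsupp.sum_add

lemma act_zero_right (r : AddMonoidAlgebra ℤ A) :
    groupRingAct r (0 : A → B) = 0 := by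
  funext x; simp [groupRingAct]

lemma act_smul_right (r : AddMonoidAlgebra ℤ A) (z : ℤ) (f : A → B) :
    groupRingAct r (z • f) = z • groupRingAct r f := by
  funext x
  simp only [groupRingAct, Pi.smul_apply]
  rw [Finsupp.smul_sum]
  exact Finsupp.sum_congr fun a _ => smul_comm _ _ _

lemma act_mul (r s : AddMonoidAlgebra ℤ A) (f : A → B) :
    groupRingAct (r * s) f = groupRingAct r (groupRingAct s f) := by
  induction r using AddMonoidAlgebra.induction_linear with
  | zero => rw [zero_mul, act_zero_left, act_zero_left]
  | add p q hp hq => rw [add_mul, act_add_left, act_add_left, hp, hq]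
  | single a z =>
    induction s using AddMonoidAlgebra.induction_linear with
    | zero => simp only [mul_zero, act_zero_left, act_zero_right]
    | add p q hp hq => rw [mul_add, act_add_left, hp, hq, act_add_left, act_add_right]
    | single b w =>
      have hs : (AddMonoidAlgebra.single a z : AddMonoidAlgebra ℤ A)
          * AddMonoidAlgebra.single b w = AddMonoidAlgebra.single (a + b) (z * w) :=
        AddMonoidAlgebra.single_mul_single ..
      rw [hs, act_single, act_single, act_single]
      funext x
      simp [mul_smul, add_assoc]

lemma act_one (f : A → B) : groupRingAct (1 : AddMonoidAlgebra ℤ A) f = f := by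
  rw [show (1 : AddMonoidAlgebra ℤ A) = AddMonoidAlgebra.single 0 1 from rfl, act_single]
  funext x; simp

lemma act_neg_left (r : AddMonoidAlgebra ℤ A) (f : A → B) :
    groupRingAct (-r) f = -groupRingAct r f := by
  have h := act_add_left r (-r) f
  rw [add_neg_cancel, act_zero_left] at h
  exact (neg_eq_of_add_eq_zero_right h.symm).symm

lemma act_sub_left (r s : AddMonoidAlgebra ℤ A) (f : A → B) :
    groupRingAct (r - s) f = groupRingAct r f - groupRingAct s f := by
  rw [sub_eq_add_neg, act_add_left, act_neg_left, sub_eq_add_neg]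

/-- linear map version in `f` -/
noncomputable def actL (r : AddMonoidAlgebra ℤ A) : (A → B) →ₗ[ℤ] (A → B) where
  toFun f := groupRingAct r f
  map_add' := act_add_right r
  map_smul' z f := act_smul_right r z f

end Aux

section Main

variable {A R : Type*} [AddCommGroup A] [Ring R]

/-- Generators of degree `k`. -/
def genSet (f g : A → R) (k : ℕ) : Set (A → R) :=
  {h | ∃ i j : ℕ, ∃ p ∈ augIdeal A ^ i, ∃ q ∈ augIdeal A ^ j,
    i + j = k ∧ h = fun x => groupRingAct p f x * groupRingAct q g x}

def Sk (f g : A → R) (k : ℕ) : Submodule ℤ (A → R) := Submodule.span ℤ (genSet f g k)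

variable (f g : A → R)

lemma tau_gen (a : A) {k : ℕ} {h : A → R} (hh : h ∈ genSet f g k) :
    groupRingAct (AddMonoidAlgebra.single a 1) h ∈ genSet f g k := by
  obtain ⟨i, j, p, hp, q, hq, hij, rfl⟩ := hh
  refine ⟨i, j, AddMonoidAlgebra.single a 1 * p, Ideal.mul_mem_left _ _ hp,
    AddMonoidAlgebra.single a 1 * q, Ideal.mul_mem_left _ _ hq, hij, ?_⟩
  funext x
  rw [act_single, act_mul, act_mul, act_single, act_single]
  simp

lemma act_mem_Sk (u : AddMonoidAlgebra ℤ A) {k : ℕ} {h : A → R} (hh : h ∈ Sk f g k) :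
    groupRingAct u h ∈ Sk f g k := by
  induction hh using Submodule.span_induction with
  | mem h hmem =>
    induction u using AddMonoidAlgebra.induction_linear with
    | zero => rw [act_zero_left]; exact Submodule.zero_mem _
    | add p q hp hq => rw [act_add_left]; exact Submodule.add_mem _ hp hq
    | single a z =>
      have : groupRingAct (AddMonoidAlgebra.single a z) h
          = z • groupRingAct (AddMonoidAlgebra.single a 1) h := by
        funext x; rw [act_single, act_single]; simp [mul_smul]
      rw [this]
      exact Submodule.smul_mem _ _ (Submodule.subset_span (tau_gen f g a hmem))
  | zero => rw [act_zero_right]; exact Submodule.zero_mem _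
  | add x y _ _ hx hy => rw [act_add_right]; exact Submodule.add_mem _ hx hy
  | smul z x _ hx => rw [act_smul_right]; exact Submodule.smul_mem _ _ hx

lemma delta_mem (a : A) : (AddMonoidAlgebra.single a 1 - 1 : AddMonoidAlgebra ℤ A) ∈ augIdeal A :=
  Ideal.subset_span ⟨a, rfl⟩

lemma delta_gen (a : A) {k : ℕ} {h : A → R} (hh : h ∈ genSet f g k) :
    groupRingAct (AddMonoidAlgebra.single a 1 - 1) h ∈ Sk f g (k + 1) := by
  obtain ⟨i, j, p, hp, q, hq, hij, rfl⟩ := hh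
  have key : groupRingAct (AddMonoidAlgebra.single a 1 - 1)
        (fun x => groupRingAct p f x * groupRingAct q g x)
      = (fun x => groupRingAct ((AddMonoidAlgebra.single a 1 - 1) * p) f x
            * groupRingAct (AddMonoidAlgebra.single a 1 * q) g x)
        + (fun x => groupRingAct p f x * groupRingAct ((AddMonoidAlgebra.single a 1 - 1) * q) g x) := by
    funext x
    have e1 : ∀ (u : AddMonoidAlgebra ℤ A) (h' : A → R),
        groupRingAct ((AddMonoidAlgebra.single a 1 - 1) * u) h' x
          = groupRingAct u h' (x + a) - groupRingAct u h' x := by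
      intro u h'
      rw [sub_mul, one_mul, act_sub_left, act_mul, act_single]
      simp
    have e2 : groupRingAct (AddMonoidAlgebra.single a 1 * q) g x = groupRingAct q g (x + a) := by
      rw [act_mul, act_single]; simp
    have e3 : groupRingAct (AddMonoidAlgebra.single a 1 - 1)
        (fun x => groupRingAct p f x * groupRingAct q g x) x
        = groupRingAct p f (x + a) * groupRingAct q g (x + a)
          - groupRingAct p f x * groupRingAct q g x := by
      rw [act_sub_left, act_single]
      simp [act_one]
    rw [e3]
    simp only [Pi.add_apply, e1, e2]
    rw [sub_mul, mul_sub]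
    abel
  rw [key]
  refine Submodule.add_mem _ (Submodule.subset_span ?_) (Submodule.subset_span ?_)
  · exact ⟨i + 1, j, _, by
      rw [pow_succ']
      exact Ideal.mul_mem_mul (delta_mem a) hp,
      _, Ideal.mul_mem_left _ _ hq, by omega, rfl⟩
  · exact ⟨i, j + 1, p, hp, _, by
      rw [pow_succ']
      exact Ideal.mul_mem_mul (delta_mem a) hq, by omega, rfl⟩

lemma act_I_step {t : AddMonoidAlgebra ℤ A} (ht : t ∈ augIdeal A) {k : ℕ} {h : A → R}
    (hh : h ∈ Sk f g k) : groupRingAct t h ∈ Sk f g (k + 1) := by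
  induction hh using Submodule.span_induction with
  | mem h hmem =>
    induction ht using Submodule.span_induction with
    | mem t htmem =>
      obtain ⟨a, rfl⟩ := htmem
      exact delta_gen f g a hmem
    | zero => rw [act_zero_left]; exact Submodule.zero_mem _
    | add x y _ _ hx hy => rw [act_add_left]; exact Submodule.add_mem _ hx hy
    | smul u t _ hx =>
      rw [show u • t = u * t from rfl, act_mul]
      exact act_mem_Sk f g u hx
  | zero => rw [act_zero_right]; exact Submodule.zero_mem _
  | add x y _ _ hx hy => rw [act_add_right]; exact Submodule.add_mem _ hx hy
  | smul z x _ hx => rw [act_smul_right]; exact Submodule.smul_mem _ _ hx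

lemma main_mem : ∀ (k : ℕ) (r : AddMonoidAlgebra ℤ A), r ∈ augIdeal A ^ k →
    groupRingAct r (fun x => f x * g x) ∈ Sk f g k := by
  intro k
  induction k with
  | zero =>
    intro r _
    refine act_mem_Sk f g r (Submodule.subset_span ?_)
    exact ⟨0, 0, 1, by simp [Ideal.one_eq_top], 1, by simp [Ideal.one_eq_top], rfl, by
      funext x; rw [act_one, act_one]⟩
  | succ k ih =>
    intro r hr
    rw [pow_succ] at hr
    refine Submodule.mul_induction_on hr ?_ ?_
    · intro x hx y hy
      rw [mul_comm, act_mul]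
      exact act_I_step f g hy (ih x hx)
    · intro x y hx hy
      rw [act_add_left]; exact Submodule.add_mem _ hx hy

lemma main_zero (n m : ℕ)
    (hf : ∀ p ∈ augIdeal A ^ (n + 1), groupRingAct p f = 0)
    (hg : ∀ q ∈ augIdeal A ^ (m + 1), groupRingAct q g = 0) :
    ∀ r ∈ augIdeal A ^ (n + m + 1), groupRingAct r (fun x => f x * g x) = 0 := by
  intro r hr
  have hmem := main_mem f g (n + m + 1) r hr
  have hbot : Sk f g (n + m + 1) ≤ ⊥ := by
    rw [Sk, Submodule.span_le]
    rintro h ⟨i, j, p, hp, q, hq, hij, rfl⟩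
    have : i ≥ n + 1 ∨ j ≥ m + 1 := by omega
    rcases this with hi | hj
    · have hp' : groupRingAct p f = 0 := hf p (Ideal.pow_le_pow_right hi hp)
      simp only [SetLike.mem_coe, Submodule.mem_bot]
      funext x; rw [hp']; simp
    · have hq' : groupRingAct q g = 0 := hg q (Ideal.pow_le_pow_right hj hq)
      simp only [SetLike.mem_coe, Submodule.mem_bot]
      funext x; rw [hq']; simp
  have := hbot hmem
  simpa using this

end Main

theorem fdeg_mul_le {A R : Type*} [AddCommGroup A] [Ring R]
    (f g : A → R) :
    fdeg (fun x : A => f x * g x) ≤ fdeg f + fdeg g := by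
  rcases eq_or_ne (fdeg f) ⊤ with hf | hf
  · rw [hf, top_add]; exact le_top
  rcases eq_or_ne (fdeg g) ⊤ with hg | hg
  · rw [hg, add_top]; exact le_top
  have hfne : {N : ℕ∞ | ∃ n : ℕ, N = (n : ℕ∞) ∧
      ∀ r ∈ augIdeal A ^ (n + 1), groupRingAct r f = 0}.Nonempty := by
    by_contra h
    rw [Set.not_nonempty_iff_eq_empty] at h
    exact hf (by rw [fdeg, h, sInf_empty])
  have hgne : {N : ℕ∞ | ∃ n : ℕ, N = (n : ℕ∞) ∧
      ∀ r ∈ augIdeal A ^ (n + 1), groupRingAct r g = 0}.Nonempty := by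
    by_contra h
    rw [Set.not_nonempty_iff_eq_empty] at h
    exact hg (by rw [fdeg, h, sInf_empty])
  obtain ⟨n, hfn, hfp⟩ := csInf_mem hfne
  obtain ⟨m, hgm, hgp⟩ := csInf_mem hgne
  rw [show fdeg f = (n : ℕ∞) from hfn, show fdeg g = (m : ℕ∞) from hgm, ← Nat.cast_add]
  exact sInf_le ⟨n + m, rfl, main_zero f g n m hfp hgp⟩
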